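/- Let m ≥ 0 and h ≥ k ≥ 1 be integers and ξ ∈ ℝ. For real q > 0, q ≠ 1, let β_m^{(h,k)}(ξ; q) = (1 − q^{-2})^{-m} Σ_{i=0}^{m} C(m,i) ((i+h)_k / ([i+h]_q)_k) (−q^{-2ξ})^i. Then as q tends to 1 within the set of positive reals different from 1, β_m^{(h,k)}(ξ; q) tends to the order-k Bernoulli polynomial value B_m^{(k)}(ξ) = Σ_{i=0}^{m} C(m,i) ξ^i b^{(k)}_{m−i}, where b^{(k)}_n = Σ over k-tuples (n_1,…,n_k) of nonnegative integers with n_1+⋯+n_k = n of (n!/(n_1!⋯n_k!)) Π_{j=1}^{k} B_{n_j}. In particular the limit does not depend on h. -/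

import Mathlib

/-!
STATEMENT 5: For m ≥ 0, h ≥ k ≥ 1, ξ ∈ ℝ, and real q > 0, q ≠ 1, let
β_m^{(h,k)}(ξ; q) = (1 − q^{-2})^{-m} Σ_{i=0}^{m} C(m,i) ((i+h)_k/([i+h]_q)_k)(−q^{-2ξ})^i.
Then as q → 1 within {q : ℝ | 0 < q ∧ q ≠ 1}, β_m^{(h,k)}(ξ; q) tends to
B_m^{(k)}(ξ) = Σ_{i=0}^{m} C(m,i) ξ^i b^{(k)}_{m−i}, where
b^{(k)}_n = Σ_{n_1+⋯+n_k=n} (n!/(n_1!⋯n_k!)) Π_j B_{n_j}.  In particular the limit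
does not depend on h.
-/

noncomputable section

/-- The q-integer [n]_q = (1 − q^{-2n})/(1 − q^{-2}) for real q. -/
def qnumR (q : ℝ) (n : ℕ) : ℝ := (1 - q⁻¹ ^ (2 * n)) / (1 - q⁻¹ ^ 2)

/-- The real falling factorial (a)_b = a(a−1)⋯(a−b+1), a natural. -/
def fallR (a b : ℕ) : ℝ := ∏ j ∈ Finset.range b, ((a : ℝ) - j)

/-- The q-falling factorial ([a]_q)_b = [a]_q[a−1]_q⋯[a−b+1]_q for real q
(used with a ≥ b). -/
def qfallR (q : ℝ) (a b : ℕ) : ℝ := ∏ j ∈ Finset.range b, qnumR q (a - j)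

/-- The q-Bernoulli polynomial value β_m^{(h,k)}(ξ; q) for real q > 0 (q^{-2ξ} is a
real power). -/
def qBernoulliPolyR (m h k : ℕ) (ξ : ℝ) (q : ℝ) : ℝ :=
  ((1 - q⁻¹ ^ 2)⁻¹) ^ m *
    ∑ i ∈ Finset.range (m + 1),
      (m.choose i : ℝ) * (fallR (i + h) k / qfallR q (i + h) k) * (-(q ^ (-2 * ξ))) ^ i

/-- The order-k Bernoulli number b^{(k)}_n = Σ_{n_1+⋯+n_k=n} (n!/(n_1!⋯n_k!)) Π_j B_{n_j},
where B denotes the classical Bernoulli numbers (B_1 = −1/2). -/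
def bernoulliOrder (k n : ℕ) : ℝ :=
  ∑ p ∈ Finset.Nat.antidiagonalTuple k n,
    (Nat.multinomial Finset.univ p : ℝ) * ∏ j : Fin k, ((bernoulli (p j) : ℚ) : ℝ)

/-- The order-k Bernoulli polynomial B_m^{(k)}(ξ) = Σ_{i=0}^m C(m,i) ξ^i b^{(k)}_{m−i}. -/
def bernoulliPolyOrder (k m : ℕ) (ξ : ℝ) : ℝ :=
  ∑ i ∈ Finset.range (m + 1), (m.choose i : ℝ) * ξ ^ i * bernoulliOrder k (m - i)

namespace QB
open Filter Asymptotics Finset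


/-- `f` agrees with the power series `F` up to order `m` near `0` (error `O(s^(m+1))`). -/
def HasExp (m : ℕ) (f : ℝ → ℝ) (F : PowerSeries ℝ) : Prop :=
  (fun s => f s - Polynomial.eval s (PowerSeries.trunc (m+1) F))
    =O[nhdsWithin (0:ℝ) {0}ᶜ] fun s => s^(m+1)

lemma eval_trunc (n : ℕ) (F : PowerSeries ℝ) (s : ℝ) :
    (PowerSeries.trunc n F).eval s = ∑ i ∈ range n, PowerSeries.coeff i F * s ^ i := by
  have := PowerSeries.eval₂_trunc_eq_sum_range (S := ℝ) s (RingHom.id ℝ) n F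
  exact this

lemma poly_isBigO_one (p : Polynomial ℝ) :
    (fun s : ℝ => p.eval s) =O[nhdsWithin (0:ℝ) {0}ᶜ] (fun _ => (1:ℝ)) := by
  have : Filter.Tendsto (fun s : ℝ => p.eval s) (nhdsWithin (0:ℝ) {0}ᶜ) (nhds (p.eval 0)) :=
    (p.continuous.tendsto 0).mono_left nhdsWithin_le_nhds
  exact this.isBigO_one ℝ

lemma dvd_isBigO {m : ℕ} {p : Polynomial ℝ} (hp : Polynomial.X ^ (m+1) ∣ p) :
    (fun s : ℝ => p.eval s) =O[nhdsWithin (0:ℝ) {0}ᶜ] fun s => s^(m+1) := by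
  obtain ⟨q, rfl⟩ := hp
  have h1 : (fun s : ℝ => s^(m+1)) =O[nhdsWithin (0:ℝ) {0}ᶜ] fun s => s^(m+1) :=
    isBigO_refl _ _
  have := h1.mul (poly_isBigO_one q)
  simpa [Polynomial.eval_mul, Polynomial.eval_pow] using this

lemma trunc_congr_of_coeff_eq {m : ℕ} {F G : PowerSeries ℝ}
    (h : ∀ n ≤ m, PowerSeries.coeff n F = PowerSeries.coeff n G) :
    PowerSeries.trunc (m+1) F = PowerSeries.trunc (m+1) G := by
  ext n
  rw [PowerSeries.coeff_trunc, PowerSeries.coeff_trunc]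
  split_ifs with hn
  · exact h n (Nat.lt_succ_iff.mp hn)
  · rfl

lemma HasExp.congr_series {m : ℕ} {f : ℝ → ℝ} {F G : PowerSeries ℝ}
    (hf : HasExp m f F) (h : ∀ n ≤ m, PowerSeries.coeff n F = PowerSeries.coeff n G) :
    HasExp m f G := by
  unfold HasExp at *
  rwa [← trunc_congr_of_coeff_eq h]

lemma HasExp.congr_fun {m : ℕ} {f g : ℝ → ℝ} {F : PowerSeries ℝ}
    (hf : HasExp m f F) (h : ∀ s : ℝ, s ≠ 0 → f s = g s) : HasExp m g F := by
  apply hf.congr' _ (EventuallyEq.refl _ _)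
  filter_upwards [self_mem_nhdsWithin] with s hs
  rw [h s hs]

lemma hasExp_const (m : ℕ) (a : ℝ) : HasExp m (fun _ => a) (PowerSeries.C a) := by
  unfold HasExp
  have : ∀ s : ℝ, a - Polynomial.eval s (PowerSeries.trunc (m+1) (PowerSeries.C a)) = 0 := by
    intro s
    rw [show (m+1) = m + 1 from rfl, PowerSeries.trunc_C]
    simp
  simp only [this]
  exact isBigO_zero _ _

lemma HasExp.add {m : ℕ} {f g : ℝ → ℝ} {F G : PowerSeries ℝ}
    (hf : HasExp m f F) (hg : HasExp m g G) : HasExp m (fun s => f s + g s) (F + G) := by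
  have := Asymptotics.IsBigO.add hf hg
  unfold HasExp at *
  simpa [map_add, add_sub_add_comm] using this

lemma HasExp.neg {m : ℕ} {f : ℝ → ℝ} {F : PowerSeries ℝ}
    (hf : HasExp m f F) : HasExp m (fun s => - f s) (-F) := by
  have := Asymptotics.IsBigO.neg_left hf
  unfold HasExp at *
  have htr : PowerSeries.trunc (m+1) (-F) = -PowerSeries.trunc (m+1) F := by
    ext n; simp [PowerSeries.coeff_trunc]
  rw [htr]
  simpa [neg_sub, sub_eq_add_neg, add_comm] using this

lemma HasExp.sub {m : ℕ} {f g : ℝ → ℝ} {F G : PowerSeries ℝ}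
    (hf : HasExp m f F) (hg : HasExp m g G) : HasExp m (fun s => f s - g s) (F - G) := by
  have := hf.add hg.neg
  simpa [sub_eq_add_neg] using this

lemma HasExp.isBigO_one {m : ℕ} {f : ℝ → ℝ} {F : PowerSeries ℝ} (hf : HasExp m f F) :
    f =O[nhdsWithin (0:ℝ) {0}ᶜ] (fun _ => (1:ℝ)) := by
  have h1 : (fun s : ℝ => s^(m+1)) =O[nhdsWithin (0:ℝ) {0}ᶜ] (fun _ => (1:ℝ)) := by
    have : Filter.Tendsto (fun s : ℝ => s^(m+1)) (nhdsWithin (0:ℝ) {0}ᶜ) (nhds 0) := by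
      have : Filter.Tendsto (fun s : ℝ => s^(m+1)) (nhds 0) (nhds 0) := by
        simpa using (continuous_pow (m+1)).tendsto (0:ℝ)
      exact this.mono_left nhdsWithin_le_nhds
    exact this.isBigO_one ℝ
  have : f = fun s => (f s - Polynomial.eval s (PowerSeries.trunc (m+1) F))
      + Polynomial.eval s (PowerSeries.trunc (m+1) F) := by
    funext s; ring
  rw [this]
  exact (hf.trans h1).add (poly_isBigO_one _)

lemma HasExp.mul {m : ℕ} {f g : ℝ → ℝ} {F G : PowerSeries ℝ}
    (hf : HasExp m f F) (hg : HasExp m g G) : HasExp m (fun s => f s * g s) (F * G) := by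
  unfold HasExp
  set P := PowerSeries.trunc (m+1) F
  set Q := PowerSeries.trunc (m+1) G
  have key : ∀ s : ℝ, f s * g s - Polynomial.eval s (PowerSeries.trunc (m+1) (F * G))
      = (f s - P.eval s) * g s + P.eval s * (g s - Q.eval s)
        + (P * Q - PowerSeries.trunc (m+1) (F * G)).eval s := by
    intro s; simp [Polynomial.eval_mul]; ring
  have hdvd : Polynomial.X ^ (m+1) ∣ (P * Q - PowerSeries.trunc (m+1) (F * G)) := by
    rw [Polynomial.X_pow_dvd_iff]
    intro d hd
    have h1 : (P * Q).coeff d = PowerSeries.coeff d (F * G) := by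
      rw [PowerSeries.coeff_mul_eq_coeff_trunc_mul_trunc₂ F G hd hd, ← Polynomial.coe_mul, Polynomial.coeff_coe]
    have h2 : (PowerSeries.trunc (m+1) (F * G)).coeff d = PowerSeries.coeff d (F * G) := by
      rw [PowerSeries.coeff_trunc, if_pos hd]
    rw [Polynomial.coeff_sub, h1, h2, sub_self]
  have t1 : (fun s => (f s - P.eval s) * g s) =O[nhdsWithin (0:ℝ) {0}ᶜ] fun s => s^(m+1) := by
    have := Asymptotics.IsBigO.mul hf hg.isBigO_one
    simpa using this
  have t2 : (fun s => P.eval s * (g s - Q.eval s)) =O[nhdsWithin (0:ℝ) {0}ᶜ]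
      fun s => s^(m+1) := by
    have := Asymptotics.IsBigO.mul (poly_isBigO_one P) hg
    simpa [mul_comm] using this
  have t3 := dvd_isBigO hdvd
  calc (fun s => f s * g s - Polynomial.eval s (PowerSeries.trunc (m+1) (F * G)))
      = fun s => (f s - P.eval s) * g s + P.eval s * (g s - Q.eval s)
        + (P * Q - PowerSeries.trunc (m+1) (F * G)).eval s := funext key
    _ =O[nhdsWithin (0:ℝ) {0}ᶜ] fun s => s^(m+1) := (t1.add t2).add t3

lemma HasExp.const_mul {m : ℕ} {f : ℝ → ℝ} {F : PowerSeries ℝ} (a : ℝ)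
    (hf : HasExp m f F) : HasExp m (fun s => a * f s) (PowerSeries.C a * F) :=
  (hasExp_const m a).mul hf

lemma hasExp_sum {m : ℕ} {ι : Type*} (s : Finset ι) (f : ι → ℝ → ℝ) (F : ι → PowerSeries ℝ)
    (h : ∀ i ∈ s, HasExp m (f i) (F i)) :
    HasExp m (fun x => ∑ i ∈ s, f i x) (∑ i ∈ s, F i) := by
  classical
  induction s using Finset.induction_on with
  | empty => simpa using hasExp_const m 0
  | insert _ _ hnotmem ih =>
      rename_i a t
      rw [Finset.sum_insert hnotmem]
      have := (h a (Finset.mem_insert_self a t)).add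
        (ih fun i hi => h i (Finset.mem_insert_of_mem hi))
      simpa [Finset.sum_insert hnotmem] using this

lemma hasExp_prod {m : ℕ} {ι : Type*} (s : Finset ι) (f : ι → ℝ → ℝ) (F : ι → PowerSeries ℝ)
    (h : ∀ i ∈ s, HasExp m (f i) (F i)) :
    HasExp m (fun x => ∏ i ∈ s, f i x) (∏ i ∈ s, F i) := by
  classical
  induction s using Finset.induction_on with
  | empty =>
      simp only [Finset.prod_empty]
      have := hasExp_const m 1
      simpa using this
  | insert _ _ hnotmem ih =>
      rename_i a t
      rw [Finset.prod_insert hnotmem]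
      have := (h a (Finset.mem_insert_self a t)).mul
        (ih fun i hi => h i (Finset.mem_insert_of_mem hi))
      simpa [Finset.prod_insert hnotmem] using this

lemma HasExp.tendsto {m : ℕ} {f : ℝ → ℝ} {F : PowerSeries ℝ} (hf : HasExp m f F) :
    Filter.Tendsto f (nhdsWithin (0:ℝ) {0}ᶜ) (nhds (PowerSeries.constantCoeff F)) := by
  have h1 : Filter.Tendsto (fun s : ℝ => f s - Polynomial.eval s (PowerSeries.trunc (m+1) F))
      (nhdsWithin (0:ℝ) {0}ᶜ) (nhds 0) := by
    apply hf.trans_tendsto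
    have : Filter.Tendsto (fun s : ℝ => s^(m+1)) (nhds 0) (nhds 0) := by
      simpa using (continuous_pow (m+1)).tendsto (0:ℝ)
    exact this.mono_left nhdsWithin_le_nhds
  have h2 : Filter.Tendsto (fun s : ℝ => Polynomial.eval s (PowerSeries.trunc (m+1) F))
      (nhdsWithin (0:ℝ) {0}ᶜ) (nhds (PowerSeries.constantCoeff F)) := by
    have hc : Filter.Tendsto (fun s : ℝ => Polynomial.eval s (PowerSeries.trunc (m+1) F))
        (nhds 0) (nhds (Polynomial.eval 0 (PowerSeries.trunc (m+1) F))) :=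
      (PowerSeries.trunc (m+1) F).continuous.tendsto 0
    have : Polynomial.eval 0 (PowerSeries.trunc (m+1) F) = PowerSeries.constantCoeff F := by
      rw [eval_trunc]
      rw [Finset.sum_eq_single 0]
      · simp [PowerSeries.coeff_zero_eq_constantCoeff]
      · intro i _ hi; simp [zero_pow hi]
      · simp
    rw [this] at hc
    exact hc.mono_left nhdsWithin_le_nhds
  have := h1.add h2
  simpa using this


lemma HasExp.inv {m : ℕ} {f : ℝ → ℝ} {F G : PowerSeries ℝ}
    (hf : HasExp m f F) (h0 : PowerSeries.constantCoeff F ≠ 0) (hFG : F * G = 1) :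
    HasExp m (fun s => (f s)⁻¹) G := by
  classical
  set P := PowerSeries.trunc (m+1) F with hP
  set Q := PowerSeries.trunc (m+1) G with hQ
  have htf : Filter.Tendsto f (nhdsWithin (0:ℝ) {0}ᶜ) (nhds (PowerSeries.constantCoeff F)) :=
    hf.tendsto
  have hne : ∀ᶠ s in nhdsWithin (0:ℝ) {0}ᶜ, f s ≠ 0 := htf.eventually_ne h0
  have hinvO : (fun s => (f s)⁻¹) =O[nhdsWithin (0:ℝ) {0}ᶜ] (fun _ => (1:ℝ)) :=
    (htf.inv₀ h0).isBigO_one ℝ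
  -- 1 - f * Q.eval  is O(s^(m+1))
  have hPQ : Polynomial.X ^ (m+1) ∣ (1 - P * Q) := by
    rw [Polynomial.X_pow_dvd_iff]
    intro d hd
    have h1 : (P * Q).coeff d = PowerSeries.coeff d (F * G) := by
      rw [PowerSeries.coeff_mul_eq_coeff_trunc_mul_trunc₂ F G hd hd, ← Polynomial.coe_mul,
        Polynomial.coeff_coe]
    rw [Polynomial.coeff_sub, h1, hFG]
    simp [PowerSeries.coeff_one, Polynomial.coeff_one]
  have hkey : (fun s => 1 - f s * Q.eval s) =O[nhdsWithin (0:ℝ) {0}ᶜ] fun s => s^(m+1) := by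
    have heq : ∀ s : ℝ, 1 - f s * Q.eval s
        = (1 - P * Q).eval s - (f s - P.eval s) * Q.eval s := by
      intro s; simp [Polynomial.eval_mul]; ring
    have t1 := dvd_isBigO hPQ
    have t2 : (fun s => (f s - P.eval s) * Q.eval s) =O[nhdsWithin (0:ℝ) {0}ᶜ]
        fun s => s^(m+1) := by
      have := Asymptotics.IsBigO.mul hf (poly_isBigO_one Q)
      simpa using this
    calc (fun s => 1 - f s * Q.eval s)
        = fun s => (1 - P * Q).eval s - (f s - P.eval s) * Q.eval s := funext heq
      _ =O[nhdsWithin (0:ℝ) {0}ᶜ] fun s => s^(m+1) := t1.sub t2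
  have : (fun s => (f s)⁻¹ * (1 - f s * Q.eval s)) =O[nhdsWithin (0:ℝ) {0}ᶜ]
      fun s => s^(m+1) := by
    have := Asymptotics.IsBigO.mul hinvO hkey
    simpa using this
  apply this.congr' _ (Filter.EventuallyEq.refl _ _)
  filter_upwards [hne] with s hs
  field_simp
  rfl

lemma HasExp.div_linear {m : ℕ} {f : ℝ → ℝ} {F : PowerSeries ℝ}
    (hf : HasExp (m+1) f F) (h0 : PowerSeries.constantCoeff F = 0) :
    HasExp m (fun s => f s / s) (PowerSeries.mk fun n => PowerSeries.coeff (n+1) F) := by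
  set G : PowerSeries ℝ := PowerSeries.mk fun n => PowerSeries.coeff (n+1) F with hG
  have htr : PowerSeries.trunc (m+2) F = Polynomial.X * PowerSeries.trunc (m+1) G := by
    ext n
    cases n with
    | zero =>
        rw [PowerSeries.coeff_trunc]
        simp [PowerSeries.coeff_zero_eq_constantCoeff, h0]
    | succ j =>
        rw [PowerSeries.coeff_trunc, Polynomial.coeff_X_mul, PowerSeries.coeff_trunc,
          PowerSeries.coeff_mk]
        by_cases hj : j < m + 1
        · rw [if_pos (by omega : j + 1 < m + 2), if_pos hj]
        · rw [if_neg (by omega : ¬ (j + 1 < m + 2)), if_neg hj]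
  have key : (fun s => (f s - Polynomial.eval s (PowerSeries.trunc (m+2) F)) * s⁻¹)
      =O[nhdsWithin (0:ℝ) {0}ᶜ] fun s => s^(m+2) * s⁻¹ := by
    exact Asymptotics.IsBigO.mul hf (isBigO_refl _ _)
  have key2 : (fun s => f s / s - Polynomial.eval s (PowerSeries.trunc (m+1) G))
      =O[nhdsWithin (0:ℝ) {0}ᶜ] fun s => s^(m+1) := by
    apply key.congr'
    · filter_upwards [self_mem_nhdsWithin] with s hs
      have hs' : (s:ℝ) ≠ 0 := hs
      rw [htr]
      simp only [Polynomial.eval_mul, Polynomial.eval_X]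
      field_simp
    · filter_upwards [self_mem_nhdsWithin] with s hs
      have hs' : (s:ℝ) ≠ 0 := hs
      rw [pow_succ]
      field_simp
  exact key2

lemma hasExp_exp (m : ℕ) (c : ℝ) :
    HasExp m (fun s => Real.exp (c * s)) (PowerSeries.rescale c (PowerSeries.exp ℝ)) := by
  unfold HasExp
  rw [Asymptotics.isBigO_iff]
  set K : ℝ := ((m+2:ℕ):ℝ) / (((m+1).factorial :ℝ) * ((m+1:ℕ):ℝ)) with hK
  refine ⟨|c| ^ (m+1) * K, ?_⟩
  have hev : ∀ᶠ s in nhdsWithin (0:ℝ) {0}ᶜ, |c * s| ≤ 1 := by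
    apply Filter.Eventually.filter_mono nhdsWithin_le_nhds
    have hct : Filter.Tendsto (fun s : ℝ => |c * s|) (nhds 0) (nhds 0) := by
      have h1 : Continuous (fun s : ℝ => |c * s|) := by fun_prop
      have := h1.tendsto (0:ℝ)
      simpa using this
    exact hct.eventually_le_const (by norm_num)
  filter_upwards [hev] with s hs
  have hbound := Real.exp_bound hs (Nat.succ_pos m)
  have hb2 : |Real.exp (c*s) - ∑ i ∈ Finset.range (m+1), (c*s)^i / i.factorial|
      ≤ |c*s|^(m+1) * K := by
    simp only [Nat.succ_eq_add_one] at hbound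
    convert hbound using 3 <;> norm_cast
  have heval : Polynomial.eval s (PowerSeries.trunc (m+1)
      (PowerSeries.rescale c (PowerSeries.exp ℝ)))
      = ∑ i ∈ Finset.range (m+1), (c*s)^i / i.factorial := by
    rw [eval_trunc]
    apply Finset.sum_congr rfl
    intro i _
    rw [PowerSeries.coeff_rescale, PowerSeries.coeff_exp]
    rw [mul_pow]
    simp only [map_div₀, map_one, map_natCast]
    field_simp
  rw [Real.norm_eq_abs, Real.norm_eq_abs, heval]
  calc |Real.exp (c*s) - ∑ i ∈ Finset.range (m+1), (c*s)^i / i.factorial|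
      ≤ |c*s|^(m+1) * K := hb2
    _ = |c|^(m+1) * K * |s^(m+1)| := by
        rw [abs_mul, mul_pow, abs_pow]; ring

lemma HasExp.tendsto_div_pow {m : ℕ} {f : ℝ → ℝ} {F : PowerSeries ℝ}
    (hf : HasExp m f F) (hlow : ∀ n < m, PowerSeries.coeff n F = 0) :
    Filter.Tendsto (fun s => f s / s ^ m) (nhdsWithin (0:ℝ) {0}ᶜ)
      (nhds (PowerSeries.coeff m F)) := by
  have hmono : (fun s : ℝ => Polynomial.eval s (PowerSeries.trunc (m+1) F)) = fun s : ℝ => PowerSeries.coeff m F * s ^ m := by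
    funext s
    rw [eval_trunc]
    rw [Finset.sum_eq_single m]
    · intro i hi hne
      rw [hlow i (lt_of_le_of_ne (Nat.lt_succ_iff.mp (Finset.mem_range.mp hi)) hne), zero_mul]
    · intro h; exact absurd (Finset.self_mem_range_succ m) h
  have h1 : Filter.Tendsto (fun s => (f s - PowerSeries.coeff m F * s ^ m) / s ^ m)
      (nhdsWithin (0:ℝ) {0}ᶜ) (nhds 0) := by
    have hO : (fun s => f s - PowerSeries.coeff m F * s ^ m) =O[nhdsWithin (0:ℝ) {0}ᶜ]
        fun s => s^(m+1) := by
      have := hf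
      unfold HasExp at this
      calc (fun s => f s - PowerSeries.coeff m F * s ^ m)
          = (fun s => f s - Polynomial.eval s (PowerSeries.trunc (m+1) F)) := by
            funext s; rw [congrFun hmono s]
        _ =O[nhdsWithin (0:ℝ) {0}ᶜ] fun s => s^(m+1) := this
    have hO2 : (fun s => (f s - PowerSeries.coeff m F * s ^ m) / s ^ m)
        =O[nhdsWithin (0:ℝ) {0}ᶜ] fun s => s := by
      have := Asymptotics.IsBigO.mul hO (isBigO_refl (fun s : ℝ => (s^m)⁻¹) _)
      apply this.congr'
      · filter_upwards with s; rw [div_eq_mul_inv]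
      · filter_upwards [self_mem_nhdsWithin] with s hs
        have hs' : (s:ℝ) ≠ 0 := hs
        field_simp [pow_succ]
        ring
    apply hO2.trans_tendsto
    exact tendsto_id.mono_left nhdsWithin_le_nhds
  have h2 : Filter.Tendsto (fun s : ℝ => (PowerSeries.coeff m F * s ^ m) / s ^ m)
      (nhdsWithin (0:ℝ) {0}ᶜ) (nhds (PowerSeries.coeff m F)) := by
    have : ∀ᶠ s in nhdsWithin (0:ℝ) {0}ᶜ, (PowerSeries.coeff m F * s ^ m) / s ^ m
        = PowerSeries.coeff m F := by
      filter_upwards [self_mem_nhdsWithin] with s hs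
      have hs' : (s:ℝ) ≠ 0 := hs
      field_simp
    rw [Filter.tendsto_congr' this]
    exact tendsto_const_nhds
  have := h1.add h2
  rw [zero_add] at this
  apply this.congr
  intro s
  ring


/-! ### The basic power series -/

open PowerSeries

/-- e^{cX} -/
def nexp (c : ℝ) : PowerSeries ℝ := rescale c (PowerSeries.exp ℝ)

lemma coeff_nexp (c : ℝ) (n : ℕ) :
    PowerSeries.coeff n (nexp c) = c ^ n / n.factorial := by
  rw [nexp, coeff_rescale, PowerSeries.coeff_exp]
  simp [div_eq_mul_inv]

/-- (1 - e^{-cX})/X -/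
def SEc (c : ℝ) : PowerSeries ℝ :=
  PowerSeries.mk fun r => PowerSeries.coeff (r+1) (1 - nexp (-c))

lemma coeff_SEc (c : ℝ) (r : ℕ) :
    PowerSeries.coeff r (SEc c) = -((-c)^(r+1) / (r+1).factorial) := by
  rw [SEc, PowerSeries.coeff_mk, map_sub, coeff_nexp]
  simp [PowerSeries.coeff_one]

lemma constantCoeff_nexp (c : ℝ) : PowerSeries.constantCoeff (nexp c) = 1 := by
  rw [← PowerSeries.coeff_zero_eq_constantCoeff, coeff_nexp]; simp

lemma constantCoeff_SEc (c : ℝ) : PowerSeries.constantCoeff (SEc c) = c := by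
  rw [← PowerSeries.coeff_zero_eq_constantCoeff, coeff_SEc]
  simp

lemma X_mul_SEc (c : ℝ) : PowerSeries.X * SEc c = 1 - nexp (-c) := by
  ext n
  cases n with
  | zero =>
      simp only [PowerSeries.coeff_zero_eq_constantCoeff, map_sub, map_mul, map_one]
      have := constantCoeff_nexp (-c)
      rw [nexp] at this
      rw [nexp, this]
      simp
  | succ j =>
      rw [PowerSeries.coeff_succ_X_mul, SEc, PowerSeries.coeff_mk]

/-- The power series X e^X/(e^X - 1) = X/(1-e^{-X}) with coefficients bernoulli'. -/
def BP : PowerSeries ℝ := bernoulli'PowerSeries ℝ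

lemma coeff_BP (n : ℕ) : PowerSeries.coeff n BP
    = ((bernoulli' n : ℚ) : ℝ) / n.factorial := by
  rw [BP, bernoulli'PowerSeries, PowerSeries.coeff_mk]
  push_cast
  rfl

lemma nexp_mul_nexp (a b : ℝ) : nexp a * nexp b = nexp (a + b) :=
  PowerSeries.exp_mul_exp_eq_exp_add a b

lemma nexp_zero : nexp 0 = 1 := by
  rw [nexp, rescale_zero]
  simp [PowerSeries.constantCoeff_exp]

lemma BP_mul_one_sub_nexp : BP * (1 - nexp (-1)) = PowerSeries.X := by
  have h0 := bernoulli'PowerSeries_mul_exp_sub_one ℝ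
  have h1 : (PowerSeries.exp ℝ - 1) * nexp (-1) = 1 - nexp (-1) := by
    have hexp : PowerSeries.exp ℝ = nexp 1 := by
      rw [nexp, rescale_one]; rfl
    rw [sub_mul, hexp, nexp_mul_nexp, one_mul]
    norm_num [nexp_zero]
  calc BP * (1 - nexp (-1)) = BP * ((PowerSeries.exp ℝ - 1) * nexp (-1)) := by rw [h1]
    _ = (BP * (PowerSeries.exp ℝ - 1)) * nexp (-1) := by ring
    _ = (PowerSeries.X * PowerSeries.exp ℝ) * nexp (-1) := by rw [BP, h0]
    _ = PowerSeries.X * (PowerSeries.exp ℝ * nexp (-1)) := by ring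
    _ = PowerSeries.X := by
        have hexp : PowerSeries.exp ℝ = nexp 1 := by rw [nexp, rescale_one]; rfl
        rw [hexp, nexp_mul_nexp]
        norm_num [nexp_zero]

lemma BP_mul_SEc_one : BP * SEc 1 = 1 := by
  have : PowerSeries.X * (BP * SEc 1) = PowerSeries.X * 1 := by
    rw [mul_one]
    calc PowerSeries.X * (BP * SEc 1) = BP * (PowerSeries.X * SEc 1) := by ring
      _ = BP * (1 - nexp (-1)) := by rw [X_mul_SEc]
      _ = PowerSeries.X := BP_mul_one_sub_nexp
  exact mul_left_cancel₀ PowerSeries.X_ne_zero this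

lemma SEc_eq_smul_rescale (c : ℝ) : SEc c = c • (rescale c (SEc 1)) := by
  ext r
  rw [coeff_SEc, PowerSeries.coeff_smul, coeff_rescale, coeff_SEc]
  have : (-c : ℝ)^(r+1) = c^(r+1) * (-1:ℝ)^(r+1) := by
    rw [← neg_one_mul c, mul_pow]; ring
  rw [this, smul_eq_mul]
  ring

lemma SEc_mul_inv (c : ℝ) (hc : c ≠ 0) : SEc c * (c⁻¹ • rescale c BP) = 1 := by
  rw [SEc_eq_smul_rescale, PowerSeries.smul_eq_C_mul, PowerSeries.smul_eq_C_mul]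
  have : rescale c (SEc 1) * rescale c BP = 1 := by
    rw [← map_mul, mul_comm (SEc 1) BP, BP_mul_SEc_one, map_one]
  calc PowerSeries.C c * rescale c (SEc 1) * (PowerSeries.C c⁻¹ * rescale c BP)
      = (PowerSeries.C c * PowerSeries.C c⁻¹) * (rescale c (SEc 1) * rescale c BP) := by
        ring
    _ = 1 := by
        rw [this, ← map_mul, mul_inv_cancel₀ hc]
        simp

/-! ### The real functions -/

/-- The function n(1-e^{-s})/(1-e^{-ns}). -/
def Freal (n : ℕ) (s : ℝ) : ℝ :=
  (n : ℝ) * (1 - Real.exp (-s)) / (1 - Real.exp (-((n:ℝ) * s)))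

lemma hasExp_one_sub_exp (m : ℕ) (c : ℝ) :
    HasExp m (fun s => (1 - Real.exp (-c * s))/s) (SEc c) := by
  have h1 : HasExp (m+1) (fun s => 1 - Real.exp (-c * s)) (1 - nexp (-c)) := by
    have := (hasExp_const (m+1) 1).sub (hasExp_exp (m+1) (-c))
    simpa [nexp] using this
  have h0 : PowerSeries.constantCoeff (1 - nexp (-c)) = 0 := by
    rw [map_sub, constantCoeff_nexp]
    simp
  exact h1.div_linear h0

lemma hasExp_Freal (m : ℕ) (n : ℕ) (hn : 0 < n) :
    HasExp m (Freal n) (SEc 1 * rescale (n:ℝ) BP) := by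
  have hnR : (n : ℝ) ≠ 0 := Nat.cast_ne_zero.mpr hn.ne'
  have hinv : HasExp m (fun s => ((1 - Real.exp (-(n:ℝ) * s))/s)⁻¹)
      (((n:ℝ))⁻¹ • rescale (n:ℝ) BP) := by
    apply (hasExp_one_sub_exp m (n:ℝ)).inv
    · rw [constantCoeff_SEc]; exact hnR
    · exact SEc_mul_inv _ hnR
  have hmul := ((hasExp_one_sub_exp m 1).mul hinv).const_mul (n:ℝ)
  have hser : PowerSeries.C (n:ℝ) * (SEc 1 * ((n:ℝ)⁻¹ • rescale (n:ℝ) BP))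
      = SEc 1 * rescale (n:ℝ) BP := by
    rw [PowerSeries.smul_eq_C_mul]
    calc PowerSeries.C (n:ℝ) * (SEc 1 * (PowerSeries.C (n:ℝ)⁻¹ * rescale (n:ℝ) BP))
        = (PowerSeries.C (n:ℝ) * PowerSeries.C (n:ℝ)⁻¹) * (SEc 1 * rescale (n:ℝ) BP) := by
          ring
      _ = SEc 1 * rescale (n:ℝ) BP := by
          rw [← map_mul, mul_inv_cancel₀ hnR]; simp
  rw [hser] at hmul
  apply hmul.congr_fun
  intro s hs
  rcases eq_or_ne (1 - Real.exp (-((n:ℝ) * s))) 0 with hz | hz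
  · have : -((n:ℝ)) * s = -((n:ℝ) * s) := by ring
    rw [Freal, hz, this, hz]
    simp
  · have : -((n:ℝ)) * s = -((n:ℝ) * s) := by ring
    rw [Freal, this]
    have h1 : (-1 : ℝ) * s = -s := by ring
    rw [h1]
    field_simp


/-! ### Finite differences -/

/-- Series (e^X - 1)/X -/
def E1 : PowerSeries ℝ := PowerSeries.mk fun r => PowerSeries.coeff (r+1) (PowerSeries.exp ℝ - 1)

lemma X_mul_E1 : PowerSeries.X * E1 = PowerSeries.exp ℝ - 1 := by
  ext n
  cases n with
  | zero =>
      simp only [PowerSeries.coeff_zero_eq_constantCoeff, map_sub, map_one]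
      rw [PowerSeries.constantCoeff_exp]
      simp
  | succ j => rw [PowerSeries.coeff_succ_X_mul, E1, PowerSeries.coeff_mk]

lemma constantCoeff_E1 : PowerSeries.constantCoeff E1 = 1 := by
  rw [← PowerSeries.coeff_zero_eq_constantCoeff, E1, PowerSeries.coeff_mk, map_sub,
    PowerSeries.coeff_exp]
  simp [PowerSeries.coeff_one]

lemma coeff_one_sub_exp_pow (m d : ℕ) (hd : d ≤ m) :
    PowerSeries.coeff d ((1 - PowerSeries.exp ℝ)^m)
      = if d = m then (-1:ℝ)^m else 0 := by
  have h1 : (1 - PowerSeries.exp ℝ)^m = (-1:PowerSeries ℝ)^m * PowerSeries.X^m * E1^m := by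
    rw [show (1 - PowerSeries.exp ℝ) = -1 * (PowerSeries.X * E1) by
      rw [X_mul_E1]; ring]
    rw [mul_pow, mul_pow]
    ring
  rw [h1]
  have : PowerSeries.coeff d ((-1:PowerSeries ℝ)^m * PowerSeries.X^m * E1^m)
      = (-1:ℝ)^m * PowerSeries.coeff d (PowerSeries.X^m * E1^m) := by
    have hneg : ((-1:PowerSeries ℝ)^m) = PowerSeries.C ((-1:ℝ)^m) := by
      rw [map_pow, map_neg, map_one]
    rw [mul_assoc, hneg, PowerSeries.coeff_C_mul]
  rw [this, PowerSeries.coeff_X_pow_mul']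
  rcases eq_or_lt_of_le hd with heq | hlt
  · subst heq
    rw [if_pos le_rfl, if_pos rfl, Nat.sub_self]
    rw [PowerSeries.coeff_zero_eq_constantCoeff, map_pow, constantCoeff_E1]
    simp
  · rw [if_neg (by omega), if_neg (by omega)]
    simp

lemma sum_choose_pow (m d : ℕ) (hd : d ≤ m) :
    ∑ i ∈ range (m+1), (-1:ℝ)^i * (m.choose i) * (i:ℝ)^d
      = if d = m then (-1:ℝ)^m * m.factorial else 0 := by
  have hbin : (1 - PowerSeries.exp ℝ)^m
      = ∑ i ∈ range (m+1), (-PowerSeries.exp ℝ)^i * 1^(m-i) * (m.choose i : PowerSeries ℝ) := by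
    rw [sub_eq_add_neg, add_comm]
    exact add_pow _ _ _
  have hcoeff : PowerSeries.coeff d ((1 - PowerSeries.exp ℝ)^m)
      = ∑ i ∈ range (m+1), (-1:ℝ)^i * (m.choose i) * ((i:ℝ)^d / d.factorial) := by
    rw [hbin, map_sum]
    apply Finset.sum_congr rfl
    intro i _
    have hterm : (-PowerSeries.exp ℝ)^i * 1^(m-i) * (m.choose i : PowerSeries ℝ)
        = PowerSeries.C ((-1:ℝ)^i * (m.choose i)) * nexp (i:ℝ) := by
      rw [one_pow, mul_one, neg_pow]
      rw [PowerSeries.exp_pow_eq_rescale_exp]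
      have : (m.choose i : PowerSeries ℝ) = PowerSeries.C (m.choose i : ℝ) := by
        simp
      rw [this, map_mul]
      simp only [map_pow, map_neg, map_one]
      rw [nexp]
      ring
    rw [hterm, PowerSeries.coeff_C_mul, coeff_nexp]
  calc ∑ i ∈ range (m+1), (-1:ℝ)^i * (m.choose i) * (i:ℝ)^d
      = (∑ i ∈ range (m+1), (-1:ℝ)^i * (m.choose i) * ((i:ℝ)^d / d.factorial)) * d.factorial := by
        rw [Finset.sum_mul]
        apply Finset.sum_congr rfl
        intro i _
        field_simp
    _ = (if d = m then (-1:ℝ)^m else 0) * d.factorial := by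
        rw [← hcoeff, coeff_one_sub_exp_pow m d hd]
    _ = if d = m then (-1:ℝ)^m * m.factorial else 0 := by
        split_ifs with hdm
        · subst hdm; ring
        · ring

lemma sum_choose_eval (m : ℕ) (Q : Polynomial ℝ) (hQ : Q.natDegree ≤ m) :
    ∑ i ∈ range (m+1), (-1:ℝ)^i * (m.choose i) * Q.eval (i:ℝ)
      = (-1:ℝ)^m * m.factorial * Q.coeff m := by
  have heval : ∀ x : ℝ, Q.eval x = ∑ d ∈ range (m+1), Q.coeff d * x^d := by
    intro x
    exact Polynomial.eval_eq_sum_range' (Nat.lt_succ_of_le hQ) x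
  calc ∑ i ∈ range (m+1), (-1:ℝ)^i * (m.choose i) * Q.eval (i:ℝ)
      = ∑ i ∈ range (m+1), ∑ d ∈ range (m+1),
          Q.coeff d * ((-1:ℝ)^i * (m.choose i) * (i:ℝ)^d) := by
        apply Finset.sum_congr rfl
        intro i _
        rw [heval, Finset.mul_sum]
        apply Finset.sum_congr rfl
        intro d _
        ring
    _ = ∑ d ∈ range (m+1), Q.coeff d * ∑ i ∈ range (m+1), (-1:ℝ)^i * (m.choose i) * (i:ℝ)^d := by
        rw [Finset.sum_comm]
        apply Finset.sum_congr rfl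
        intro d _
        rw [Finset.mul_sum]
    _ = ∑ d ∈ range (m+1), Q.coeff d * (if d = m then (-1:ℝ)^m * m.factorial else 0) := by
        apply Finset.sum_congr rfl
        intro d hd
        rw [sum_choose_pow m d (Nat.lt_succ_iff.mp (Finset.mem_range.mp hd))]
    _ = (-1:ℝ)^m * m.factorial * Q.coeff m := by
        rw [Finset.sum_eq_single m]
        · rw [if_pos rfl]; ring
        · intro d _ hne; rw [if_neg hne, mul_zero]
        · intro h; exact absurd (Finset.self_mem_range_succ m) h


/-! ### Two-variable series -/

/-- e^{-ξ Y X} as a power series in X over ℝ[Y]. -/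
def EY (ξ : ℝ) : PowerSeries (Polynomial ℝ) :=
  PowerSeries.mk fun n => ((-ξ)^n / n.factorial) • Polynomial.X ^ n

/-- (1-e^{-X})/X over ℝ[Y] (constant in Y). -/
def SEY : PowerSeries (Polynomial ℝ) := PowerSeries.map (Polynomial.C) (SEc 1)

/-- (Y+c)X/(1 - e^{-(Y+c)X}) over ℝ[Y]. -/
def PhiY (c : ℝ) : PowerSeries (Polynomial ℝ) :=
  PowerSeries.mk fun r => (((bernoulli' r : ℚ) : ℝ) / r.factorial) • (Polynomial.X + Polynomial.C c)^r

def Tser (ξ : ℝ) (h k : ℕ) : PowerSeries (Polynomial ℝ) :=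
  EY ξ * ∏ j ∈ range k, (SEY * PhiY ((h:ℝ) - (j:ℝ)))

/-- The series for the i-th term. -/
def Aser (ξ : ℝ) (h k i : ℕ) : PowerSeries ℝ :=
  nexp (-(ξ * i)) * ∏ j ∈ range k, (SEc 1 * rescale ((i+h-j : ℕ) : ℝ) BP)

lemma map_eval_EY (ξ : ℝ) (i : ℕ) :
    PowerSeries.map (Polynomial.evalRingHom (i:ℝ)) (EY ξ) = nexp (-(ξ * i)) := by
  ext n
  rw [PowerSeries.coeff_map, EY, PowerSeries.coeff_mk, coeff_nexp]
  show Polynomial.eval (i:ℝ) (((-ξ)^n / n.factorial) • Polynomial.X ^ n) = _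
  rw [Polynomial.eval_smul]
  simp only [Polynomial.eval_pow, Polynomial.eval_X, smul_eq_mul]
  rw [div_mul_eq_mul_div, ← mul_pow]
  ring_nf

lemma map_eval_SEY (i : ℕ) :
    PowerSeries.map (Polynomial.evalRingHom (i:ℝ)) SEY = SEc 1 := by
  ext n
  rw [PowerSeries.coeff_map, SEY, PowerSeries.coeff_map]
  simp

lemma map_eval_PhiY (i h j : ℕ) (hj : j ≤ h) :
    PowerSeries.map (Polynomial.evalRingHom (i:ℝ)) (PhiY ((h:ℝ) - (j:ℝ)))
      = rescale ((i+h-j : ℕ) : ℝ) BP := by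
  ext r
  rw [PowerSeries.coeff_map, PhiY, PowerSeries.coeff_mk, coeff_rescale, coeff_BP]
  simp only [Polynomial.coe_evalRingHom]
  rw [Polynomial.eval_smul]
  simp only [Polynomial.eval_pow, Polynomial.eval_add, Polynomial.eval_X, Polynomial.eval_C,
    smul_eq_mul]
  have hcast : ((i + h - j : ℕ) : ℝ) = (i:ℝ) + ((h:ℝ) - (j:ℝ)) := by
    have : j ≤ i + h := le_trans hj (Nat.le_add_left h i)
    push_cast [Nat.cast_sub this]
    ring
  rw [hcast]
  ring

lemma map_eval_Tser (ξ : ℝ) (h k i : ℕ) (hkh : k ≤ h) :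
    PowerSeries.map (Polynomial.evalRingHom (i:ℝ)) (Tser ξ h k) = Aser ξ h k i := by
  rw [Tser, Aser, map_mul, map_prod, map_eval_EY]
  congr 1
  apply Finset.prod_congr rfl
  intro j hj
  rw [map_mul, map_eval_SEY, map_eval_PhiY i h j (le_trans (Nat.le_of_lt_succ
    (Nat.lt_succ_of_lt (Finset.mem_range.mp hj))) hkh)]

/-! ### Degree bounds and top coefficients -/

/-- `φ` has `n`-th coefficient of `Y`-degree at most `n`, with top coefficients given by `u`. -/
def Rel (φ : PowerSeries (Polynomial ℝ)) (u : PowerSeries ℝ) : Prop :=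
  (∀ n, (PowerSeries.coeff n φ).natDegree ≤ n) ∧
    (∀ n, (PowerSeries.coeff n φ).coeff n = PowerSeries.coeff n u)

lemma Rel.one : Rel 1 1 := by
  constructor <;> intro n
  · rw [PowerSeries.coeff_one]
    split_ifs <;> simp
  · rw [PowerSeries.coeff_one, PowerSeries.coeff_one]
    split_ifs with hn
    · subst hn; simp
    · simp

lemma Rel.mul {φ ψ : PowerSeries (Polynomial ℝ)} {u v : PowerSeries ℝ}
    (hφ : Rel φ u) (hψ : Rel ψ v) : Rel (φ * ψ) (u * v) := by
  constructor
  · intro n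
    rw [PowerSeries.coeff_mul]
    apply Polynomial.natDegree_sum_le_of_forall_le
    intro p hp
    have hsum : p.1 + p.2 = n := Finset.HasAntidiagonal.mem_antidiagonal.mp hp
    calc ((PowerSeries.coeff p.1 φ) * (PowerSeries.coeff p.2 ψ)).natDegree
        ≤ (PowerSeries.coeff p.1 φ).natDegree + (PowerSeries.coeff p.2 ψ).natDegree :=
          Polynomial.natDegree_mul_le
      _ ≤ p.1 + p.2 := Nat.add_le_add (hφ.1 p.1) (hψ.1 p.2)
      _ = n := hsum
  · intro n
    rw [PowerSeries.coeff_mul, PowerSeries.coeff_mul, Polynomial.finset_sum_coeff]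
    apply Finset.sum_congr rfl
    intro p hp
    have hsum : p.1 + p.2 = n := Finset.HasAntidiagonal.mem_antidiagonal.mp hp
    rw [← hsum, Polynomial.coeff_mul_add_eq_of_natDegree_le (hφ.1 p.1) (hψ.1 p.2),
      hφ.2 p.1, hψ.2 p.2]

lemma Rel.prod {ι : Type*} (s : Finset ι) (f : ι → PowerSeries (Polynomial ℝ))
    (g : ι → PowerSeries ℝ) (h : ∀ i ∈ s, Rel (f i) (g i)) :
    Rel (∏ i ∈ s, f i) (∏ i ∈ s, g i) := by
  classical
  induction s using Finset.induction_on with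
  | empty => simpa using Rel.one
  | insert _ _ hnotmem ih =>
      rename_i a t
      rw [Finset.prod_insert hnotmem, Finset.prod_insert hnotmem]
      exact (h a (Finset.mem_insert_self a t)).mul
        (ih fun i hi => h i (Finset.mem_insert_of_mem hi))

lemma Rel.EY (ξ : ℝ) : Rel (EY ξ) (nexp (-ξ)) := by
  constructor <;> intro n <;> rw [QB.EY, PowerSeries.coeff_mk]
  · exact le_trans (Polynomial.natDegree_smul_le _ _) (le_of_eq (Polynomial.natDegree_X_pow n))
  · rw [coeff_nexp, Polynomial.coeff_smul]
    simp

lemma Rel.SEY : Rel SEY 1 := by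
  constructor <;> intro n <;> rw [QB.SEY, PowerSeries.coeff_map]
  · simp
  · rw [Polynomial.coeff_C, PowerSeries.coeff_one]
    split_ifs with hn
    · subst hn
      rw [PowerSeries.coeff_zero_eq_constantCoeff, constantCoeff_SEc]
    · rfl

lemma Rel.PhiY (c : ℝ) : Rel (PhiY c) BP := by
  constructor <;> intro n <;> rw [QB.PhiY, PowerSeries.coeff_mk]
  · apply le_trans (Polynomial.natDegree_smul_le _ _)
    apply le_trans (Polynomial.natDegree_pow_le)
    rw [Polynomial.natDegree_X_add_C]
    simp
  · have hm : ((Polynomial.X + Polynomial.C c)^n).Monic := (Polynomial.monic_X_add_C c).pow n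
    have hd : ((Polynomial.X + Polynomial.C c)^n).natDegree = n := by
      rw [Polynomial.natDegree_pow, Polynomial.natDegree_X_add_C, mul_one]
    rw [Polynomial.coeff_smul, coeff_BP]
    have : ((Polynomial.X + Polynomial.C c)^n).coeff n = 1 := by
      have := hm.coeff_natDegree
      rwa [hd] at this
    rw [this]
    simp

lemma Rel.Tser (ξ : ℝ) (h k : ℕ) : Rel (Tser ξ h k) (nexp (-ξ) * BP ^ k) := by
  have h1 : Rel (QB.Tser ξ h k) (nexp (-ξ) * ∏ _j ∈ range k, ((1:PowerSeries ℝ) * BP)) := by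
    apply (Rel.EY ξ).mul
    apply Rel.prod
    intro j _
    exact Rel.SEY.mul (Rel.PhiY _)
  have h2 : (∏ _j ∈ range k, ((1:PowerSeries ℝ) * BP)) = BP ^ k := by
    simp [Finset.prod_const]
  rwa [h2] at h1


/-! ### The main series and its coefficients -/

def Sser (ξ : ℝ) (m h k : ℕ) : PowerSeries ℝ :=
  ∑ i ∈ range (m+1), ((-1:ℝ)^i * (m.choose i : ℝ)) • Aser ξ h k i

lemma coeff_Sser (ξ : ℝ) (m h k : ℕ) (hkh : k ≤ h) {n : ℕ} (hn : n ≤ m) :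
    PowerSeries.coeff n (Sser ξ m h k)
      = if n = m then (-1:ℝ)^m * m.factorial * PowerSeries.coeff m (nexp (-ξ) * BP ^ k)
        else 0 := by
  have hQdeg : (PowerSeries.coeff n (Tser ξ h k)).natDegree ≤ m :=
    le_trans ((Rel.Tser ξ h k).1 n) hn
  have hstep : PowerSeries.coeff n (Sser ξ m h k)
      = ∑ i ∈ range (m+1), (-1:ℝ)^i * (m.choose i : ℝ)
          * (PowerSeries.coeff n (Tser ξ h k)).eval ((i:ℕ):ℝ) := by
    rw [Sser, map_sum]
    apply Finset.sum_congr rfl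
    intro i _
    rw [PowerSeries.coeff_smul, smul_eq_mul]
    congr 1
    rw [← map_eval_Tser ξ h k i hkh, PowerSeries.coeff_map]
    rfl
  rw [hstep, sum_choose_eval m _ hQdeg]
  rcases eq_or_lt_of_le hn with heq | hlt
  · subst heq
    rw [if_pos rfl, (Rel.Tser ξ h k).2 n]
  · rw [if_neg (by omega)]
    rw [Polynomial.coeff_eq_zero_of_natDegree_lt (lt_of_le_of_lt ((Rel.Tser ξ h k).1 n) hlt)]
    ring

/-- The real function Ψ. -/
def Psi (ξ : ℝ) (m h k : ℕ) : ℝ → ℝ := fun s =>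
  ∑ i ∈ range (m+1), (-1:ℝ)^i * (m.choose i : ℝ)
    * (Real.exp (-(ξ * i) * s) * ∏ j ∈ range k, Freal (i+h-j) s)

lemma hasExp_Psi (ξ : ℝ) (m h k : ℕ) (hk : 1 ≤ k) (hkh : k ≤ h) :
    HasExp m (Psi ξ m h k) (Sser ξ m h k) := by
  have hterm : ∀ i ∈ range (m+1), HasExp m
      (fun s => (-1:ℝ)^i * (m.choose i : ℝ)
        * (Real.exp (-(ξ * i) * s) * ∏ j ∈ range k, Freal (i+h-j) s))
      (((-1:ℝ)^i * (m.choose i : ℝ)) • Aser ξ h k i) := by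
    intro i _
    have hprod : HasExp m (fun s => ∏ j ∈ range k, Freal (i+h-j) s)
        (∏ j ∈ range k, (SEc 1 * rescale ((i+h-j : ℕ) : ℝ) BP)) := by
      apply hasExp_prod
      intro j hj
      apply hasExp_Freal
      have : j < k := Finset.mem_range.mp hj
      omega
    have hmul := (hasExp_exp m (-(ξ * i))).mul hprod
    have := hmul.const_mul ((-1:ℝ)^i * (m.choose i : ℝ))
    rw [← PowerSeries.smul_eq_C_mul] at this
    exact this
  exact hasExp_sum _ _ _ hterm

/-! ### Identification of the top coefficient -/

lemma coeff_pow_tuple (φ : PowerSeries ℝ) (k b : ℕ) :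
    PowerSeries.coeff b (φ^k)
      = ∑ p ∈ Finset.Nat.antidiagonalTuple k b, ∏ j : Fin k, PowerSeries.coeff (p j) φ := by
  classical
  rw [PowerSeries.coeff_pow]
  apply Finset.sum_nbij' (i := fun l : ℕ →₀ ℕ => fun j : Fin k => l j.val)
    (j := fun p : Fin k → ℕ =>
      Finsupp.onFinset (range k) (fun x => if hx : x < k then p ⟨x, hx⟩ else 0)
        (fun x hx => Finset.mem_range.mpr (by
          by_contra hxk
          exact hx (dif_neg (fun hc => hxk hc)))))
  · intro l hl
    rw [Finset.mem_finsuppAntidiag] at hl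
    rw [Finset.Nat.mem_antidiagonalTuple]
    rw [Fin.sum_univ_eq_sum_range (fun x => l x) k]
    exact hl.1
  · intro p hp
    rw [Finset.Nat.mem_antidiagonalTuple] at hp
    rw [Finset.mem_finsuppAntidiag]
    constructor
    · rw [← Fin.sum_univ_eq_sum_range
        (fun x => (Finsupp.onFinset (range k) (fun x => if hx : x < k then p ⟨x, hx⟩ else 0)
          (fun x hx => Finset.mem_range.mpr (by
            by_contra hxk
            exact hx (dif_neg (fun hc => hxk hc))))) x) k]
      rw [← hp]
      apply Finset.sum_congr rfl
      intro j _
      rw [Finsupp.onFinset_apply]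
      exact dif_pos j.isLt
    · intro x hx
      rw [Finsupp.mem_support_iff] at hx
      rw [Finset.mem_range]
      by_contra hxk
      exact hx (dif_neg (fun hc => hxk hc))
  · intro l hl
    rw [Finset.mem_finsuppAntidiag] at hl
    apply Finsupp.ext
    intro x
    rw [Finsupp.onFinset_apply]
    by_cases hx : x < k
    · rw [dif_pos hx]
    · rw [dif_neg hx]
      by_contra hne
      have hmem : x ∈ l.support := Finsupp.mem_support_iff.mpr (fun hc => hne hc.symm)
      have := hl.2 hmem
      rw [Finset.mem_range] at this
      exact hx this
  · intro p _
    funext j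
    rw [Finsupp.onFinset_apply, dif_pos j.isLt]
  · intro l _
    exact (Fin.prod_univ_eq_prod_range (fun x => PowerSeries.coeff (l x) φ) k).symm

lemma bernoulliOrder_eq (k b : ℕ) :
    (-1:ℝ)^b * b.factorial * PowerSeries.coeff b (BP ^ k) = bernoulliOrder k b := by
  rw [coeff_pow_tuple, bernoulliOrder, Finset.mul_sum]
  apply Finset.sum_congr rfl
  intro p hp
  rw [Finset.Nat.mem_antidiagonalTuple] at hp
  have hmult : (Nat.multinomial Finset.univ p : ℝ) * (∏ j : Fin k, ((p j).factorial : ℝ))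
      = (b.factorial : ℝ) := by
    have := Nat.multinomial_spec Finset.univ p
    rw [hp] at this
    calc (Nat.multinomial Finset.univ p : ℝ) * (∏ j : Fin k, ((p j).factorial : ℝ))
        = (((∏ j : Fin k, (p j).factorial) * Nat.multinomial Finset.univ p : ℕ) : ℝ) := by
          push_cast; ring
      _ = (b.factorial : ℝ) := by rw [this]
  have hsign : (-1:ℝ)^b = ∏ j : Fin k, (-1:ℝ)^(p j) := by
    rw [Finset.prod_pow_eq_pow_sum, hp]
  have hbern : ∀ j : Fin k, PowerSeries.coeff (p j) BP
      = ((bernoulli' (p j) : ℚ) : ℝ) / (p j).factorial := fun j => coeff_BP (p j)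
  rw [Finset.prod_congr rfl fun j _ => hbern j]
  have hfac_ne : ∀ j : Fin k, ((p j).factorial : ℝ) ≠ 0 :=
    fun j => Nat.cast_ne_zero.mpr (p j).factorial_ne_zero
  rw [Finset.prod_div_distrib]
  have hB : ∀ j : Fin k, ((bernoulli (p j) : ℚ) : ℝ)
      = (-1:ℝ)^(p j) * ((bernoulli' (p j) : ℚ) : ℝ) := by
    intro j
    rw [bernoulli]
    push_cast
    ring
  rw [Finset.prod_congr rfl fun j _ => hB j, Finset.prod_mul_distrib, ← hsign]
  field_simp [← hmult]
  rw [← hmult]; ring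

lemma top_value (m k : ℕ) (ξ : ℝ) :
    (-1:ℝ)^m * m.factorial * PowerSeries.coeff m (nexp (-ξ) * BP ^ k)
      = bernoulliPolyOrder k m ξ := by
  rw [PowerSeries.coeff_mul, Finset.Nat.sum_antidiagonal_eq_sum_range_succ_mk,
    bernoulliPolyOrder, Finset.mul_sum]
  apply Finset.sum_congr rfl
  intro i hi
  have him : i ≤ m := Nat.lt_succ_iff.mp (Finset.mem_range.mp hi)
  rw [coeff_nexp]
  have hsplit : (-1:ℝ)^m = (-1:ℝ)^i * (-1:ℝ)^(m-i) := by
    rw [← pow_add]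
    congr 1
    omega
  have hfac : (m.factorial : ℝ) = (m.choose i : ℝ) * (i.factorial : ℝ) * ((m-i).factorial : ℝ) := by
    have := Nat.choose_mul_factorial_mul_factorial him
    calc (m.factorial : ℝ) = ((m.choose i * i.factorial * (m-i).factorial : ℕ) : ℝ) := by
          rw [this]
      _ = (m.choose i : ℝ) * (i.factorial : ℝ) * ((m-i).factorial : ℝ) := by push_cast; ring
  have hneg : (-ξ:ℝ)^i = (-1:ℝ)^i * ξ^i := by
    rw [← neg_one_mul, mul_pow]
  rw [← bernoulliOrder_eq k (m-i)]
  have hifac : (i.factorial : ℝ) ≠ 0 := Nat.cast_ne_zero.mpr i.factorial_ne_zero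
  rw [hsplit, hfac, hneg]
  have hsq : (-1:ℝ)^i * (-1:ℝ)^i = 1 := by
    rw [← pow_add, ← two_mul, pow_mul]
    norm_num
  field_simp
  linear_combination ((m.choose i : ℝ) * ξ^i * PowerSeries.coeff (m-i) (BP ^ k)) * hsq


/-! ### Final assembly -/

/-- The function of s = 2 log q equal to the q-Bernoulli polynomial. -/
def Gfun (ξ : ℝ) (m h k : ℕ) : ℝ → ℝ := fun s =>
  ((1 - Real.exp (-s))⁻¹)^m * ∑ i ∈ range (m+1),
    (m.choose i : ℝ) * (∏ j ∈ range k, Freal (i+h-j) s) * (-(Real.exp (-(ξ * s))))^i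

lemma exp_neg_s (q : ℝ) (hq : 0 < q) : Real.exp (-(2 * Real.log q)) = q⁻¹ ^ 2 := by
  rw [Real.exp_neg, show (2 : ℝ) * Real.log q = (2:ℕ) * Real.log q by norm_num,
    Real.exp_nat_mul, Real.exp_log hq, inv_pow]

lemma exp_neg_ns (q : ℝ) (hq : 0 < q) (n : ℕ) :
    Real.exp (-((n:ℝ) * (2 * Real.log q))) = q⁻¹ ^ (2 * n) := by
  rw [Real.exp_neg, show (n:ℝ) * (2 * Real.log q) = ((2*n : ℕ) : ℝ) * Real.log q by
    push_cast; ring, Real.exp_nat_mul, Real.exp_log hq, inv_pow]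

lemma qB_eq_Gfun (m h k : ℕ) (hkh : k ≤ h) (ξ : ℝ) (q : ℝ) (hq : 0 < q) :
    qBernoulliPolyR m h k ξ q = Gfun ξ m h k (2 * Real.log q) := by
  set s := 2 * Real.log q with hs
  have hfall : ∀ i : ℕ, fallR (i + h) k / qfallR q (i + h) k
      = ∏ j ∈ range k, Freal (i+h-j) s := by
    intro i
    rw [fallR, qfallR, ← Finset.prod_div_distrib]
    apply Finset.prod_congr rfl
    intro j hj
    have hjk : j < k := Finset.mem_range.mp hj
    have hjh : j ≤ i + h := by omega
    have hqnum : qnumR q (i + h - j)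
        = (1 - Real.exp (-(((i+h-j : ℕ):ℝ) * s))) / (1 - Real.exp (-s)) := by
      rw [qnumR, exp_neg_ns q hq, exp_neg_s q hq]
    have hcast : ((i + h : ℕ) : ℝ) - (j:ℝ) = ((i + h - j : ℕ) : ℝ) := by
      push_cast [Nat.cast_sub hjh]
      ring
    rw [hqnum, hcast, Freal, div_div_eq_mul_div]
  rw [qBernoulliPolyR, Gfun]
  have hrpow : q ^ (-2 * ξ) = Real.exp (-(ξ * s)) := by
    rw [Real.rpow_def_of_pos hq, hs]
    congr 1
    ring
  congr 1
  · rw [hs, exp_neg_s q hq]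
  · apply Finset.sum_congr rfl
    intro i _
    rw [hfall i, hrpow]

lemma Gfun_eq (ξ : ℝ) (m h k : ℕ) (s : ℝ) (hs : s ≠ 0) :
    Gfun ξ m h k s = (Psi ξ m h k s / s^m) * (((1 - Real.exp (-s))/s)⁻¹)^m := by
  rw [Gfun, Psi]
  set A := 1 - Real.exp (-s) with hA
  have hsum : ∑ i ∈ range (m+1),
      (m.choose i : ℝ) * (∏ j ∈ range k, Freal (i+h-j) s) * (-(Real.exp (-(ξ * s))))^i
      = ∑ i ∈ range (m+1), (-1:ℝ)^i * (m.choose i : ℝ)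
          * (Real.exp (-(ξ * i) * s) * ∏ j ∈ range k, Freal (i+h-j) s) := by
    apply Finset.sum_congr rfl
    intro i _
    have h1 : (-(Real.exp (-(ξ * s))))^i = (-1:ℝ)^i * Real.exp (-(ξ * i) * s) := by
      rw [neg_pow]
      congr 1
      rw [← Real.exp_nat_mul]
      congr 1
      ring
    rw [h1]
    ring
  rw [hsum]
  set P := ∑ i ∈ range (m+1), (-1:ℝ)^i * (m.choose i : ℝ)
      * (Real.exp (-(ξ * i) * s) * ∏ j ∈ range k, Freal (i+h-j) s) with hP
  have hsm : (s:ℝ)^m ≠ 0 := pow_ne_zero m hs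
  rw [inv_div, div_pow]
  rcases eq_or_ne (A^m) 0 with hAm | hAm
  · rw [hAm, div_zero, mul_zero]
    have hA0 : A = 0 := by
      by_contra hA0
      exact pow_ne_zero m hA0 hAm
    rcases Nat.eq_zero_or_pos m with hm | hm
    · subst hm
      simp at hAm
    · rw [hA0, inv_zero, zero_pow (by omega), zero_mul]
  · field_simp
    rw [one_div_pow]; field_simp

theorem main_tendsto (m h k : ℕ) (hk : 1 ≤ k) (hkh : k ≤ h) (ξ : ℝ) :
    Filter.Tendsto (qBernoulliPolyR m h k ξ)
      (nhdsWithin 1 {q : ℝ | 0 < q ∧ q ≠ 1})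
      (nhds (bernoulliPolyOrder k m ξ)) := by
  -- limit of Psi / s^m
  have hlow : ∀ n < m, PowerSeries.coeff n (Sser ξ m h k) = 0 := by
    intro n hn
    rw [coeff_Sser ξ m h k hkh (le_of_lt hn), if_neg (by omega)]
  have hm : PowerSeries.coeff m (Sser ξ m h k) = bernoulliPolyOrder k m ξ := by
    rw [coeff_Sser ξ m h k hkh le_rfl, if_pos rfl, top_value]
  have t1 : Filter.Tendsto (fun s => Psi ξ m h k s / s^m) (nhdsWithin (0:ℝ) {0}ᶜ)
      (nhds (bernoulliPolyOrder k m ξ)) := by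
    have := (hasExp_Psi ξ m h k hk hkh).tendsto_div_pow hlow
    rwa [hm] at this
  -- limit of ((1-e^{-s})/s)⁻¹ ^ m
  have t2 : Filter.Tendsto (fun s : ℝ => (((1 - Real.exp (-s))/s)⁻¹)^m)
      (nhdsWithin (0:ℝ) {0}ᶜ) (nhds 1) := by
    have h0 : Filter.Tendsto (fun s : ℝ => (1 - Real.exp (-s))/s)
        (nhdsWithin (0:ℝ) {0}ᶜ) (nhds 1) := by
      have := (hasExp_one_sub_exp 0 1).tendsto
      rw [constantCoeff_SEc] at this
      apply this.congr
      intro s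
      norm_num
    have h1 := (h0.inv₀ one_ne_zero).pow m
    simpa using h1
  have t3 : Filter.Tendsto (Gfun ξ m h k) (nhdsWithin (0:ℝ) {0}ᶜ)
      (nhds (bernoulliPolyOrder k m ξ)) := by
    have := t1.mul t2
    rw [mul_one] at this
    apply this.congr'
    filter_upwards [self_mem_nhdsWithin] with s hs
    exact (Gfun_eq ξ m h k s hs).symm
  -- the log map
  have tlog : Filter.Tendsto (fun q : ℝ => 2 * Real.log q)
      (nhdsWithin 1 {q : ℝ | 0 < q ∧ q ≠ 1}) (nhdsWithin (0:ℝ) {0}ᶜ) := by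
    rw [tendsto_nhdsWithin_iff]
    constructor
    · have hc : Filter.Tendsto (fun q : ℝ => 2 * Real.log q) (nhds 1) (nhds 0) := by
        have := (Real.continuousAt_log (one_ne_zero)).tendsto
        rw [Real.log_one] at this
        have := this.const_mul (2:ℝ)
        simpa using this
      exact hc.mono_left nhdsWithin_le_nhds
    · filter_upwards [self_mem_nhdsWithin] with q hq
      obtain ⟨hq0, hq1⟩ := hq
      simp only [Set.mem_compl_iff, Set.mem_singleton_iff]
      intro hc
      have : Real.log q = 0 := by linarith
      rcases Real.log_eq_zero.mp this with h | h | h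
      · exact absurd h (ne_of_gt hq0)
      · exact hq1 h
      · linarith
  have := t3.comp tlog
  apply this.congr'
  filter_upwards [self_mem_nhdsWithin] with q hq
  exact (qB_eq_Gfun m h k hkh ξ q hq.1).symm

end QB

/-- As q → 1 within the positive reals different from 1, β_m^{(h,k)}(ξ; q) tends to the
order-k Bernoulli polynomial value B_m^{(k)}(ξ); in particular the limit is
independent of h. -/
theorem qBernoulliPolyR_tendsto_bernoulliPolyOrder (m h k : ℕ) (hk : 1 ≤ k) (hhk : k ≤ h)
    (ξ : ℝ) :
    Filter.Tendsto (qBernoulliPolyR m h k ξ)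
      (nhdsWithin 1 {q : ℝ | 0 < q ∧ q ≠ 1})
      (nhds (bernoulliPolyOrder k m ξ)) := QB.main_tendsto m h k hk hhk ξ

end
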